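/- The base-1/2·3/2 representation of a natural number N ≥ 1 is unique: if ds and ds' are two base-1/2·3/2 representations of the same natural number N ≥ 1, both with all digits at most 2 and neither having a trailing zero entry (no leading zero digit in big-endian notation), then ds = ds'. -/

import Mathlib

/-- `ds` is a base-1/2·3/2 representation of the natural number `N`
(the representation of Akiyama, Frougny, and Sakarovitch with p = 3, q = 2):
a finite little-endian list of digits, each at most 2, with
`N = Σ ds[i] · (1/2) · (3/2)^i`. -/
def IsAFSRep (N : ℕ) (ds : List ℕ) : Prop :=
  (∀ d ∈ ds, d ≤ 2) ∧
    (N : ℚ) = ∑ i ∈ Finset.range ds.length,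
      (ds.getD i 0 : ℚ) * (1 / 2 : ℚ) * (3 / 2 : ℚ) ^ i

def Vafs (ds : List ℕ) : ℚ :=
  ∑ i ∈ Finset.range ds.length, (ds.getD i 0 : ℚ) * (1 / 2 : ℚ) * (3 / 2 : ℚ) ^ i

lemma Vafs_nil : Vafs [] = 0 := by simp [Vafs]

lemma Vafs_cons (d : ℕ) (t : List ℕ) : Vafs (d :: t) = (d : ℚ) / 2 + (3/2) * Vafs t := by
  unfold Vafs
  rw [List.length_cons, Finset.sum_range_succ']
  simp only [List.getD_cons_succ, List.getD_cons_zero]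
  rw [Finset.mul_sum, add_comm]
  congr 1
  · ring
  · exact Finset.sum_congr rfl fun i _ => by ring

lemma Vafs_nonneg (ds : List ℕ) : 0 ≤ Vafs ds := by
  apply Finset.sum_nonneg
  intro i _
  positivity

lemma Vafs_mul_pow (ds : List ℕ) : ∃ n : ℕ, Vafs ds * 2 ^ ds.length = n := by
  induction ds with
  | nil => exact ⟨0, by simp [Vafs_nil]⟩
  | cons d t ih =>
    obtain ⟨n, hn⟩ := ih
    refine ⟨d * 2 ^ t.length + 3 * n, ?_⟩
    rw [Vafs_cons, List.length_cons]
    push_cast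
    rw [← hn]
    ring

lemma Vafs_eq_zero (ds : List ℕ) (h0 : Vafs ds = 0) (hz : ds.getLast? ≠ some 0) : ds = [] := by
  by_contra hne
  have hlast := List.getLast?_eq_getLast hne
  have hk : ds.length - 1 < ds.length := by
    cases ds with
    | nil => exact absurd rfl hne
    | cons a l => simp
  have hall := (Finset.sum_eq_zero_iff_of_nonneg (by intro i _; positivity)).mp h0
  have hterm := hall (ds.length - 1) (Finset.mem_range.mpr hk)
  have hd0 : ds.getD (ds.length - 1) 0 = 0 := by
    by_contra hd
    have : (0:ℚ) < (ds.getD (ds.length - 1) 0 : ℚ) * (1/2) * (3/2) ^ (ds.length - 1) := by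
      have : 0 < ds.getD (ds.length - 1) 0 := Nat.pos_of_ne_zero hd
      positivity
    linarith [hterm]
  rw [List.getD_eq_getElem ds 0 hk] at hd0
  rw [← List.getLast_eq_getElem hne] at hd0
  exact hz (hlast ▸ hd0 ▸ rfl)

lemma tail_trailing {d : ℕ} {t : List ℕ} (hz : (d::t).getLast? ≠ some 0) :
    t.getLast? ≠ some 0 := by
  cases t with
  | nil => simp
  | cons b l => rwa [List.getLast?_cons_cons] at hz

lemma exists_nat_val (N d : ℕ) (t : List ℕ) (hv : (N:ℚ) = Vafs (d :: t)) :
    ∃ M : ℕ, Vafs t = M ∧ 2 * N = d + 3 * M := by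
  obtain ⟨n, hn⟩ := Vafs_mul_pow t
  rw [Vafs_cons] at hv
  have hq : (3:ℚ) * Vafs t = 2 * N - d := by linarith
  have hd2N : d ≤ 2 * N := by
    have h0 := Vafs_nonneg t
    have : (d : ℚ) ≤ 2 * N := by linarith
    exact_mod_cast this
  have ha : ((2 * N - d : ℕ) : ℚ) = 3 * Vafs t := by
    push_cast [hd2N]
    linarith
  have h3n : 3 * n = (2 * N - d) * 2 ^ t.length := by
    have : (3 * n : ℚ) = ((2 * N - d : ℕ) : ℚ) * 2 ^ t.length := by
      rw [← hn, ha]; ring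
    exact_mod_cast this
  have hdvd : 3 ∣ (2 * N - d) := by
    have h1 : (3:ℕ) ∣ (2 * N - d) * 2 ^ t.length := ⟨n, h3n.symm⟩
    exact (Nat.Coprime.dvd_of_dvd_mul_right (Nat.Coprime.pow_right _ (by norm_num)) h1)
  obtain ⟨M, hM⟩ := hdvd
  refine ⟨M, ?_, by omega⟩
  have : (3:ℚ) * Vafs t = 3 * M := by
    rw [← ha, hM]; push_cast; ring
  linarith

lemma afs_key : ∀ N : ℕ, ∀ ds ds' : List ℕ, (∀ d ∈ ds, d ≤ 2) → (∀ d ∈ ds', d ≤ 2) →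
    (N : ℚ) = Vafs ds → (N : ℚ) = Vafs ds' →
    ds.getLast? ≠ some 0 → ds'.getLast? ≠ some 0 → ds = ds' := by
  intro N
  induction N using Nat.strong_induction_on with
  | _ N ih =>
  intro ds ds' hd hd' hv hv' hz hz'
  rcases Nat.eq_zero_or_pos N with rfl | hN
  · rw [Vafs_eq_zero ds (by exact_mod_cast hv.symm) hz,
        Vafs_eq_zero ds' (by exact_mod_cast hv'.symm) hz']
  obtain ⟨d, t, rfl⟩ : ∃ d t, ds = d :: t := by
    cases ds with
    | nil =>
      exfalso; rw [Vafs_nil] at hv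
      have : N = 0 := by exact_mod_cast hv
      omega
    | cons a l => exact ⟨a, l, rfl⟩
  obtain ⟨d', t', rfl⟩ : ∃ d t, ds' = d :: t := by
    cases ds' with
    | nil =>
      exfalso; rw [Vafs_nil] at hv'
      have : N = 0 := by exact_mod_cast hv'
      omega
    | cons a l => exact ⟨a, l, rfl⟩
  obtain ⟨M, hMt, hMeq⟩ := exists_nat_val N d t hv
  obtain ⟨M', hMt', hMeq'⟩ := exists_nat_val N d' t' hv'
  have hdle : d ≤ 2 := hd d List.mem_cons_self
  have hdle' : d' ≤ 2 := hd' d' List.mem_cons_self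
  have hdd : d = d' ∧ M = M' := by omega
  obtain ⟨rfl, rfl⟩ := hdd
  have hMlt : M < N := by omega
  have ht : t = t' := by
    apply ih M hMlt
    · exact fun x hx => hd x (List.mem_cons_of_mem _ hx)
    · exact fun x hx => hd' x (List.mem_cons_of_mem _ hx)
    · exact hMt.symm
    · exact hMt'.symm
    · exact tail_trailing hz
    · exact tail_trailing hz'
  rw [ht]

/-- The base-1/2·3/2 representation of a natural number `N ≥ 1` is unique,
provided neither representation has a trailing zero entry. -/
theorem afs_rep_unique (N : ℕ) (hN : 1 ≤ N) (ds ds' : List ℕ)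
    (h : IsAFSRep N ds) (h' : IsAFSRep N ds')
    (hz : ds.getLast? ≠ some 0) (hz' : ds'.getLast? ≠ some 0) :
    ds = ds' := by
  exact afs_key N ds ds' h.1 h'.1 h.2 h'.2 hz hz'
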